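/- Let G be a d-regular (s,δ)-edge expander that is connected, and χ a charge function with odd total charge. Then every resolution refutation of Ts(G,χ) requires clause space at least δ·s/d. -/

import Mathlib

/-- A literal over Boolean variables of type `X`: a variable together with a sign. -/
abbrev Lit (X : Type) := X × Bool

/-- A clause: a finite set of literals, interpreted disjunctively. -/
abbrev Clause (X : Type) := Finset (Lit X)

/-- A configuration: a finite set of clauses, interpreted conjunctively. -/
abbrev Config (X : Type) := Finset (Clause X)

/-- The negation of a literal. -/
def negLit {X : Type} (l : Lit X) : Lit X := (l.1, !l.2)

/-- A clause (or term) is trivial if it contains both a variable and its negation. -/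
def IsTrivialClause {X : Type} (C : Clause X) : Prop :=
  ∃ v : X, (v, true) ∈ C ∧ (v, false) ∈ C

/-- A total assignment satisfies a literal. -/
def SatLit {X : Type} (α : X → Bool) (l : Lit X) : Prop := α l.1 = l.2

/-- A total assignment satisfies a clause (some literal is true). -/
def SatClause {X : Type} (α : X → Bool) (C : Clause X) : Prop := ∃ l ∈ C, SatLit α l

/-- A total assignment satisfies a term (all literals are true). -/
def SatTerm {X : Type} (α : X → Bool) (T : Finset (Lit X)) : Prop := ∀ l ∈ T, SatLit α l

/-- A total assignment satisfies a configuration (all clauses are true). -/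
def SatConfig {X : Type} (α : X → Bool) (𝒞 : Config X) : Prop := ∀ C ∈ 𝒞, SatClause α C

/-- The term `¬E` negating a clause `E`. -/
def negTerm {X : Type} [DecidableEq X] (E : Clause X) : Finset (Lit X) := E.image negLit

/-- `E` is a resolvent of clauses `C` and `D`: there is a variable `v` occurring
positively (sign `b`) in `C` and negatively in `D`, and `E = (C ∖ {vᵇ}) ∪ (D ∖ {v^¬b})`. -/
def IsResolvent {X : Type} [DecidableEq X] (E C D : Clause X) : Prop :=
  ∃ (v : X) (b : Bool), (v, b) ∈ C ∧ (v, !b) ∈ D ∧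
    E = C.erase (v, b) ∪ D.erase (v, !b)

/-- A single step of a resolution derivation from the CNF formula `F`:
axiom download, inference by resolution, inference by weakening, or erasure. -/
inductive ResStep {X : Type} [DecidableEq X] (F : Set (Clause X)) :
    Config X → Config X → Prop
  | download (𝒞 : Config X) (A : Clause X) (hA : A ∈ F) :
      ResStep F 𝒞 (insert A 𝒞)
  | infer (𝒞 : Config X) (E C D : Clause X) (hC : C ∈ 𝒞) (hD : D ∈ 𝒞)
      (h : IsResolvent E C D) : ResStep F 𝒞 (insert E 𝒞)
  | weaken (𝒞 : Config X) (E C : Clause X) (hC : C ∈ 𝒞) (h : C ⊆ E) :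
      ResStep F 𝒞 (insert E 𝒞)
  | erase (𝒞 : Config X) (C : Clause X) (hC : C ∈ 𝒞) :
      ResStep F 𝒞 (𝒞.erase C)

/-- A resolution refutation of the CNF formula `F`: a sequence of configurations
starting from the empty configuration, ending with a configuration containing the
empty clause, where each configuration follows from the previous by a legal step. -/
structure ResRefutation {X : Type} [DecidableEq X] (F : Set (Clause X)) where
  len : ℕ
  conf : ℕ → Config X
  init : conf 0 = ∅
  final : (∅ : Clause X) ∈ conf len
  step : ∀ t < len, ResStep F (conf t) (conf (t + 1))

/-- The refutation has (clause) space at most `s`. -/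
def ResRefutation.spaceLE {X : Type} [DecidableEq X] {F : Set (Clause X)}
    (π : ResRefutation F) (s : ℕ) : Prop :=
  ∀ t ≤ π.len, (π.conf t).card ≤ s

/-- The refutation has width at most `w`. -/
def ResRefutation.widthLE {X : Type} [DecidableEq X] {F : Set (Clause X)}
    (π : ResRefutation F) (w : ℕ) : Prop :=
  ∀ t ≤ π.len, ∀ C ∈ π.conf t, C.card ≤ w

/-- The edges of `G` incident to the vertex `v`. -/
def incidentEdges {V : Type} [Fintype V] [DecidableEq V] (G : SimpleGraph V)
    [DecidableRel G.Adj] (v : V) : Finset (Sym2 V) :=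
  G.edgeFinset.filter (fun e => v ∈ e)

/-- The canonical CNF encoding `PARITY_{v,χ}` of the parity constraint
`∑_{e ∋ v} x_e ≡ χ(v) (mod 2)`: for each assignment `f` of the edge variables
violating the constraint at `v`, the clause over the edges incident to `v`
falsified exactly by `f`. -/
def parityCNF {V : Type} [Fintype V] [DecidableEq V] (G : SimpleGraph V)
    [DecidableRel G.Adj] (χ : V → ZMod 2) (v : V) : Set (Clause (Sym2 V)) :=
  { C | ∃ f : Sym2 V → Bool,
      (∑ e ∈ incidentEdges G v, (if f e then (1 : ZMod 2) else 0)) ≠ χ v ∧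
      C = (incidentEdges G v).image (fun e => (e, ! f e)) }

/-- The Tseitin formula `Ts(G, χ) = ⋀_{v ∈ V} PARITY_{v,χ}`, as a set of clauses
over the edge variables. -/
def Tseitin {V : Type} [Fintype V] [DecidableEq V] (G : SimpleGraph V)
    [DecidableRel G.Adj] (χ : V → ZMod 2) : Set (Clause (Sym2 V)) :=
  ⋃ v : V, parityCNF G χ v

/-- The assignment `α` to the edge variables satisfies the parity constraint at `v`. -/
def SatParity {V : Type} [Fintype V] [DecidableEq V] (G : SimpleGraph V)
    [DecidableRel G.Adj] (χ : V → ZMod 2) (α : Sym2 V → Bool) (v : V) : Prop :=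
  (∑ e ∈ incidentEdges G v, (if α e then (1 : ZMod 2) else 0)) = χ v

/-- The edge boundary `∂(U)` of a vertex set `U`: edges of `G` with exactly one
endpoint in `U`. -/
def edgeBoundary {V : Type} (G : SimpleGraph V) (U : Finset V) : Set (Sym2 V) :=
  { e | e ∈ G.edgeSet ∧ ∃ a b : V, e = s(a, b) ∧ a ∈ U ∧ b ∉ U }

/-- `G` is an `(s, δ)`-edge expander: every vertex set `U` with `|U| ≤ s` has
`|∂(U)| ≥ δ |U|`. -/
def IsEdgeExpander {V : Type} (G : SimpleGraph V) (s : ℕ) (δ : ℝ) : Prop :=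
  ∀ U : Finset V, U.card ≤ s → δ * U.card ≤ (edgeBoundary G U).ncard


namespace TS15
set_option linter.unusedSectionVars false

open Finset

variable {V : Type} [Fintype V] [DecidableEq V] (G : SimpleGraph V) [DecidableRel G.Adj]

lemma mem_incidentEdges {v : V} {e : Sym2 V} :
    e ∈ incidentEdges G v ↔ e ∈ G.edgeSet ∧ v ∈ e := by
  simp [incidentEdges, SimpleGraph.mem_edgeFinset]

lemma incidentEdges_eq_incidenceFinset (v : V) :
    incidentEdges G v = G.incidenceFinset v := by
  ext e
  simp [mem_incidentEdges, SimpleGraph.mem_incidenceFinset, SimpleGraph.incidenceSet]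

lemma card_incidentEdges (v : V) : (incidentEdges G v).card = G.degree v := by
  rw [incidentEdges_eq_incidenceFinset]
  exact G.card_incidenceFinset_eq_degree v

/-- Parity of an assignment at a vertex. -/
def bparity (α : Sym2 V → Bool) (v : V) : ZMod 2 :=
  ∑ e ∈ incidentEdges G v, (if α e then (1 : ZMod 2) else 0)

lemma satParity_iff {χ : V → ZMod 2} {α : Sym2 V → Bool} {v : V} :
    SatParity G χ α v ↔ bparity G α v = χ v := Iff.rfl

/-- Flip an assignment at one edge. -/
def eflip (α : Sym2 V → Bool) (f : Sym2 V) : Sym2 V → Bool :=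
  fun e => if e = f then !(α e) else α e

lemma eflip_apply_ne {α : Sym2 V → Bool} {f e : Sym2 V} (h : e ≠ f) :
    eflip α f e = α e := by simp [eflip, h]

lemma bparity_eflip_not_mem {α : Sym2 V → Bool} {f : Sym2 V} {v : V}
    (h : f ∉ incidentEdges G v) : bparity G (eflip α f) v = bparity G α v := by
  refine Finset.sum_congr rfl fun e he => ?_
  have : e ≠ f := fun h' => h (h' ▸ he)
  simp [eflip, this]

lemma bparity_eflip_mem {α : Sym2 V → Bool} {f : Sym2 V} {v : V}
    (h : f ∈ incidentEdges G v) : bparity G (eflip α f) v = bparity G α v + 1 := by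
  unfold bparity
  rw [← Finset.add_sum_erase _ _ h, ← Finset.add_sum_erase _ _ h]
  have h1 : ∑ e ∈ (incidentEdges G v).erase f, (if eflip α f e then (1 : ZMod 2) else 0)
      = ∑ e ∈ (incidentEdges G v).erase f, (if α e then (1 : ZMod 2) else 0) := by
    refine Finset.sum_congr rfl fun e he => ?_
    have : e ≠ f := Finset.ne_of_mem_erase he
    simp [eflip, this]
  rw [h1]
  have h2 : (if eflip α f f then (1 : ZMod 2) else 0) = (if α f then (1 : ZMod 2) else 0) + 1 := by
    simp only [eflip, if_pos rfl]
    cases α f <;> decide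
  rw [h2]; ring

/-- The linear boundary map. -/
def Phi (x : Sym2 V → ZMod 2) (v : V) : ZMod 2 := ∑ e ∈ incidentEdges G v, x e

lemma Phi_add (x y : Sym2 V → ZMod 2) (v : V) :
    Phi G (fun e => x e + y e) v = Phi G x v + Phi G y v := by
  simp [Phi, Finset.sum_add_distrib]

lemma Phi_single {a b : V} (hab : G.Adj a b) (v : V) :
    Phi G (fun e => if e = s(a,b) then 1 else 0) v
      = (if v = a then 1 else 0) + (if v = b then 1 else 0) := by
  have hmem : s(a,b) ∈ incidentEdges G v ↔ (v = a ∨ v = b) := by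
    rw [mem_incidentEdges]
    simp [SimpleGraph.mem_edgeSet, hab, Sym2.mem_iff]
  have hsum : Phi G (fun e => if e = s(a,b) then (1 : ZMod 2) else 0) v
      = if s(a,b) ∈ incidentEdges G v then 1 else 0 := by
    unfold Phi
    exact Finset.sum_ite_eq' (incidentEdges G v) (s(a,b)) (fun _ => (1 : ZMod 2))
  rw [hsum]
  have hne : a ≠ b := hab.ne
  by_cases hva : v = a
  · subst hva
    simp [hmem, hne]
  · by_cases hvb : v = b
    · subst hvb
      simp [hmem, hva]
    · have : ¬(v = a ∨ v = b) := by tauto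
      simp [hmem, hva, hvb, this]

lemma Phi_walk {a b : V} (w : G.Walk a b) :
    ∃ x, ∀ v, Phi G x v = (if v = a then 1 else 0) + (if v = b then 1 else 0) := by
  induction w with
  | nil =>
    refine ⟨fun _ => 0, fun v => ?_⟩
    have hz : ∀ z : ZMod 2, z + z = 0 := by decide
    have h0 : Phi G (fun _ => (0 : ZMod 2)) v = 0 := by simp [Phi]
    rw [h0]; exact (hz _).symm
  | @cons u c b huc w ih =>
    obtain ⟨x₂, hx₂⟩ := ih
    refine ⟨fun e => (if e = s(u,c) then 1 else 0) + x₂ e, fun v => ?_⟩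
    rw [Phi_add, Phi_single G huc, hx₂]
    have key : ∀ X Y Z : ZMod 2, X + Y + (Y + Z) = X + Z := by decide
    exact key _ _ _

lemma Phi_pair (hconn : G.Connected) (a b : V) :
    ∃ x, ∀ v, Phi G x v = (if v = a then 1 else 0) + (if v = b then 1 else 0) := by
  obtain ⟨w⟩ := hconn.preconnected a b
  exact Phi_walk G w

end TS15

namespace TS15
set_option linter.unusedSectionVars false
open Finset

variable {V : Type} [Fintype V] [DecidableEq V] (G : SimpleGraph V) [DecidableRel G.Adj]

lemma zmod2_cases : ∀ z : ZMod 2, z = 0 ∨ z = 1 := by decide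

lemma Phi_surj (hconn : G.Connected) :
    ∀ (g : V → ZMod 2), (∑ v, g v = 0) → ∃ x, ∀ v, Phi G x v = g v := by
  have main : ∀ (n : ℕ) (g : V → ZMod 2),
      (Finset.univ.filter (fun v => g v ≠ 0)).card = n → (∑ v, g v = 0) →
      ∃ x, ∀ v, Phi G x v = g v := by
    intro n
    induction n using Nat.strong_induction_on with
    | _ n ih =>
      intro g hcard hsum
      rcases Nat.eq_zero_or_pos n with hn | hn
      · subst hn
        have hzero : ∀ v, g v = 0 := by
          intro v
          by_contra hv
          have : v ∈ Finset.univ.filter (fun v => g v ≠ 0) := by simp [hv]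
          rw [Finset.card_eq_zero] at hcard
          simp [hcard] at this
        exact ⟨fun _ => 0, fun v => by simp [Phi, hzero v]⟩
      · have htwo : (1 : ZMod 2) + 1 = 0 := by decide
        set S := Finset.univ.filter (fun v => g v ≠ 0) with hS
        have hSne : S.Nonempty := by
          rw [← Finset.card_pos, hcard]; exact hn
        obtain ⟨a, ha⟩ := hSne
        -- sum over S equals card S
        have hgS : ∀ v ∈ S, g v = 1 := by
          intro v hv
          rcases zmod2_cases (g v) with h | h
          · exfalso; rw [hS] at hv; simp [h] at hv
          · exact h
        have hsum' : ∑ v, g v = (S.card : ZMod 2) := by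
          rw [← Finset.sum_filter_add_sum_filter_not Finset.univ (fun v => g v ≠ 0) g]
          have h1 : ∑ v ∈ S, g v = (S.card : ZMod 2) := by
            rw [Finset.sum_congr rfl hgS]; simp
          have h2 : ∑ v ∈ Finset.univ.filter (fun v => ¬ g v ≠ 0), g v = 0 := by
            refine Finset.sum_eq_zero fun v hv => ?_
            simp only [Finset.mem_filter, not_not] at hv
            exact hv.2
          rw [← hS]
          rw [h1, h2, add_zero]
        have hcard_even : (S.card : ZMod 2) = 0 := by rw [← hsum', hsum]
        have hcard_ne_one : S.card ≠ 1 := by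
          intro h
          rw [h] at hcard_even
          simp at hcard_even
        have hcard2 : 2 ≤ S.card := by
          rcases Nat.lt_or_ge S.card 2 with h | h
          · interval_cases h' : S.card <;> simp_all
          · exact h
        obtain ⟨b, hb, hab⟩ : ∃ b ∈ S, b ≠ a := by
          have : 1 < S.card := hcard2
          obtain ⟨b, hb, hba⟩ := Finset.exists_mem_ne this a
          exact ⟨b, hb, hba⟩
        -- define g' := g + e_a + e_b
        set g' : V → ZMod 2 :=
          fun v => g v + ((if v = a then 1 else 0) + (if v = b then 1 else 0)) with hg'
        have hga : g a = 1 := hgS a ha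
        have hgb : g b = 1 := hgS b hb
        have hg'a : g' a = 0 := by
          simp [hg', hga, Ne.symm hab, htwo]
        have hg'b : g' b = 0 := by
          simp [hg', hgb, hab, htwo]
        have hg'other : ∀ v, v ≠ a → v ≠ b → g' v = g v := by
          intro v h1 h2; simp [hg', h1, h2]
        have hfilter : Finset.univ.filter (fun v => g' v ≠ 0) = (S.erase a).erase b := by
          ext v
          simp only [Finset.mem_filter, Finset.mem_univ, true_and, Finset.mem_erase]
          constructor
          · intro hv
            have hva : v ≠ a := by rintro rfl; exact hv hg'a
            have hvb : v ≠ b := by rintro rfl; exact hv hg'b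
            rw [hg'other v hva hvb] at hv
            exact ⟨hvb, hva, by rw [hS]; simp [hv]⟩
          · rintro ⟨hvb, hva, hvS⟩
            rw [hg'other v hva hvb]
            rw [hS] at hvS; simp at hvS; exact hvS
        have hcard' : ((S.erase a).erase b).card = n - 2 := by
          have h1 : (S.erase a).card = n - 1 := by rw [Finset.card_erase_of_mem ha, hcard]
          have hbmem : b ∈ S.erase a := Finset.mem_erase.mpr ⟨hab, hb⟩
          rw [Finset.card_erase_of_mem hbmem, h1]
          omega
        have hsum'' : ∑ v, g' v = 0 := by
          have : ∑ v, g' v = (∑ v, g v) +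
              ((∑ v, (if v = a then (1:ZMod 2) else 0)) + (∑ v, (if v = b then (1:ZMod 2) else 0))) := by
            rw [hg']
            rw [Finset.sum_add_distrib, Finset.sum_add_distrib]
          rw [this, hsum]
          simp [htwo]
        obtain ⟨x', hx'⟩ := ih (n - 2) (by omega) g' (by rw [hfilter, hcard']) hsum''
        obtain ⟨x'', hx''⟩ := Phi_pair G hconn a b
        refine ⟨fun e => x' e + x'' e, fun v => ?_⟩
        rw [Phi_add, hx', hx'']
        have key : ∀ X Y : ZMod 2, (X + Y) + Y = X := by decide
        rw [hg']
        exact key _ _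
  intro g hsum
  exact main _ g rfl hsum

/-- Constraints on any proper subset of vertices are satisfiable. -/
lemma sat_on_proper (hconn : G.Connected) (χ : V → ZMod 2) (U : Finset V)
    (hU : U ≠ Finset.univ) : ∃ α, ∀ u ∈ U, SatParity G χ α u := by
  obtain ⟨v0, hv0⟩ : ∃ v0, v0 ∉ U := by
    by_contra h
    push_neg at h
    exact hU (Finset.eq_univ_iff_forall.mpr h)
  set c : ZMod 2 := ∑ u ∈ U, χ u with hc
  set g : V → ZMod 2 := fun w => if w ∈ U then χ w else (if w = v0 then c else 0) with hg
  have hsum : ∑ v, g v = 0 := by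
    rw [← Finset.sum_filter_add_sum_filter_not Finset.univ (fun v => v ∈ U) g]
    have hfU : Finset.univ.filter (fun v => v ∈ U) = U := by
      ext v; simp
    have h1 : ∑ v ∈ Finset.univ.filter (fun v => v ∈ U), g v = c := by
      rw [hfU, hc]
      refine Finset.sum_congr rfl fun v hv => ?_
      simp [hg, hv]
    have h2 : ∑ v ∈ Finset.univ.filter (fun v => ¬ v ∈ U), g v = c := by
      have : ∀ v ∈ Finset.univ.filter (fun v => ¬ v ∈ U), g v = if v = v0 then c else 0 := by
        intro v hv
        simp only [Finset.mem_filter] at hv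
        simp [hg, hv.2]
      rw [Finset.sum_congr rfl this]
      rw [Finset.sum_ite_eq' (Finset.univ.filter (fun v => ¬ v ∈ U)) v0 (fun _ => c)]
      simp [hv0]
    rw [h1, h2]
    have : ∀ z : ZMod 2, z + z = 0 := by decide
    exact this c
  obtain ⟨x, hx⟩ := Phi_surj G hconn g hsum
  refine ⟨fun e => if x e = 1 then true else false, fun u hu => ?_⟩
  rw [satParity_iff]
  have hterm : ∀ e, (if (if x e = 1 then true else false) = true then (1 : ZMod 2) else 0) = x e := by
    intro e
    rcases zmod2_cases (x e) with h | h <;> simp [h]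
  have : bparity G (fun e => if x e = 1 then true else false) u = Phi G x u := by
    unfold bparity Phi
    exact Finset.sum_congr rfl fun e _ => hterm e
  rw [this, hx]
  simp [hg, hu]

end TS15

namespace TS15
set_option linter.unusedSectionVars false
set_option maxHeartbeats 1000000
open Finset

variable {V : Type} [Fintype V] [DecidableEq V] (G : SimpleGraph V) [DecidableRel G.Adj]

/-- A set of literals is functional: at most one sign per variable. -/
def Func (ρ : Finset (Lit (Sym2 V))) : Prop :=
  ∀ e b b', (e, b) ∈ ρ → (e, b') ∈ ρ → b = b'

variable (χ : V → ZMod 2) (s : ℕ)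

/-- A partial assignment (as a set of literals) is *good*: it can be extended to a total
assignment satisfying the parity constraints on any set of at most `s` vertices. -/
def PSat (ρ : Finset (Lit (Sym2 V))) : Prop :=
  ∀ U : Finset V, U.card ≤ s → ∃ α, SatTerm α ρ ∧ ∀ u ∈ U, SatParity G χ α u

/-- Forcing: every good extension compatible with parities on `U` gives `e` the value `f e`. -/
def Forces (ρ : Finset (Lit (Sym2 V))) (f : Sym2 V → Bool) (U : Finset V) (e : Sym2 V) : Prop :=
  ∀ α, SatTerm α ρ → (∀ u ∈ U, SatParity G χ α u) → α e = f e

lemma Func_mono {ρ ρ' : Finset (Lit (Sym2 V))} (h : ρ' ⊆ ρ) (hF : Func ρ) : Func ρ' :=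
  fun e b b' h1 h2 => hF e b b' (h h1) (h h2)

lemma PSat_mono {ρ ρ' : Finset (Lit (Sym2 V))} (h : ρ' ⊆ ρ) (hP : PSat G χ s ρ) :
    PSat G χ s ρ' := by
  intro U hU
  obtain ⟨α, hα1, hα2⟩ := hP U hU
  exact ⟨α, fun l hl => hα1 l (h hl), hα2⟩

lemma PSat_empty (hconn : G.Connected) (hs : s < Fintype.card V) : PSat G χ s ∅ := by
  intro U hU
  have hUne : U ≠ Finset.univ := by
    intro h
    rw [h, Finset.card_univ] at hU
    omega
  obtain ⟨α, hα⟩ := sat_on_proper G hconn χ U hUne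
  exact ⟨α, by simp [SatTerm], hα⟩

lemma mem_dom {ρ : Finset (Lit (Sym2 V))} {e : Sym2 V} :
    e ∈ ρ.image Prod.fst ↔ ∃ b, (e, b) ∈ ρ := by
  simp only [Finset.mem_image]
  constructor
  · rintro ⟨⟨e', b⟩, hmem, rfl⟩
    exact ⟨b, hmem⟩
  · rintro ⟨b, hb⟩
    exact ⟨(e, b), hb, rfl⟩

lemma Func_insert {ρ : Finset (Lit (Sym2 V))} (hF : Func ρ) {e : Sym2 V} (c : Bool)
    (h : ∀ b, (e, b) ∉ ρ) : Func (insert (e, c) ρ) := by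
  intro e' b b' h1 h2
  rcases Finset.mem_insert.mp h1 with h1 | h1 <;> rcases Finset.mem_insert.mp h2 with h2 | h2
  · rw [Prod.mk.injEq] at h1 h2
    rw [h1.2, h2.2]
  · rw [Prod.mk.injEq] at h1
    exact absurd (h1.1 ▸ h2) (h b')
  · rw [Prod.mk.injEq] at h2
    exact absurd (h2.1 ▸ h1) (h b)
  · exact hF e' b b' h1 h2

lemma ncard_le_of_subset_finset {S : Set (Sym2 V)} {t : Finset (Sym2 V)} (h : S ⊆ ↑t) :
    S.ncard ≤ t.card := by
  have := Set.ncard_le_ncard h t.finite_toSet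
  simpa using this

lemma bool_resolve : ∀ b c : Bool, b ≠ c → b = !c := by decide

lemma zmod2_fix : ∀ z w : ZMod 2, z ≠ w → z + 1 = w := by decide

/-- Key forcing lemma: if some unassigned value is forced by a set of ≤ s parity
constraints, then there is a small forcing set whose boundary lies in dom ρ ∪ {e}. -/
lemma forcing_lemma {δ : ℝ} (hexp : IsEdgeExpander G s δ)
    (ρ : Finset (Lit (Sym2 V))) (hF : Func ρ)
    (f : Sym2 V → Bool) (e : Sym2 V) (he : e ∉ ρ.image Prod.fst)
    (U : Finset V) (hUs : U.card ≤ s) (hforce : Forces G χ ρ f U e) :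
    ∃ U' : Finset V, U'.card ≤ s ∧ Forces G χ ρ f U' e ∧
      (∀ x ∈ edgeBoundary G U', x ∈ ρ.image Prod.fst ∨ x = e) ∧
      δ * U'.card ≤ ρ.card + 1 := by
  classical
  -- minimal forcing subset
  have hUmem : U ∈ U.powerset.filter (fun U' => Forces G χ ρ f U' e) := by
    simp [Finset.mem_filter, Finset.mem_powerset, hforce]
  obtain ⟨U', hU'mem, hU'min⟩ :=
    Finset.exists_min_image (U.powerset.filter (fun U' => Forces G χ ρ f U' e))
      Finset.card ⟨U, hUmem⟩
  simp only [Finset.mem_filter, Finset.mem_powerset] at hU'mem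
  obtain ⟨hU'sub, hU'force⟩ := hU'mem
  have hU's : U'.card ≤ s := le_trans (Finset.card_le_card hU'sub) hUs
  have hmin : ∀ u ∈ U', ¬ Forces G χ ρ f (U'.erase u) e := by
    intro u hu hforce'
    have hmem : U'.erase u ∈ U.powerset.filter (fun U'' => Forces G χ ρ f U'' e) := by
      simp only [Finset.mem_filter, Finset.mem_powerset]
      exact ⟨le_trans (Finset.erase_subset u U') hU'sub, hforce'⟩
    have := hU'min _ hmem
    rw [Finset.card_erase_of_mem hu] at this
    have hpos : 0 < U'.card := Finset.card_pos.mpr ⟨u, hu⟩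
    omega
  -- boundary claim
  have hbd : ∀ x ∈ edgeBoundary G U', x ∈ ρ.image Prod.fst ∨ x = e := by
    intro x hx
    obtain ⟨hxe, a, c, hxac, haU, hcU⟩ := hx
    by_contra hcon
    push_neg at hcon
    obtain ⟨hxdom, hxne⟩ := hcon
    have hnf := hmin a haU
    unfold Forces at hnf
    push_neg at hnf
    obtain ⟨α, hα1, hα2, hα3⟩ := hnf
    -- α does not satisfy parity at a
    have hnpar : ¬ SatParity G χ α a := by
      intro hpar
      have : ∀ u ∈ U', SatParity G χ α u := by
        intro u hu
        by_cases hua : u = a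
        · exact hua ▸ hpar
        · exact hα2 u (Finset.mem_erase.mpr ⟨hua, hu⟩)
      exact hα3 (hU'force α hα1 this)
    set α' := eflip α x with hα'
    have hterm : SatTerm α' ρ := by
      intro l hl
      have hne : l.1 ≠ x := by
        intro h
        exact hxdom (mem_dom.mpr ⟨l.2, by rw [← h]; exact hl⟩)
      have : α' l.1 = α l.1 := eflip_apply_ne hne
      rw [SatLit, this]
      exact hα1 l hl
    have hpar' : ∀ u ∈ U', SatParity G χ α' u := by
      intro u hu
      by_cases hua : u = a
      · subst hua
        have hxmem : x ∈ incidentEdges G u := by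
          rw [mem_incidentEdges]
          exact ⟨hxe, by rw [hxac]; simp⟩
        rw [satParity_iff, hα', bparity_eflip_mem G hxmem]
        exact zmod2_fix _ _ (fun h => hnpar h)
      · have hux : ¬ x ∈ incidentEdges G u := by
          rw [mem_incidentEdges]
          rintro ⟨-, hux⟩
          rw [hxac, Sym2.mem_iff] at hux
          rcases hux with h | h
          · exact hua h
          · exact hcU (h ▸ hu)
        rw [satParity_iff, hα', bparity_eflip_not_mem G hux]
        exact hα2 u (Finset.mem_erase.mpr ⟨hua, hu⟩)
    have := hU'force α' hterm hpar'
    rw [hα', eflip_apply_ne (Ne.symm hxne)] at this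
    exact hα3 this
  -- expansion bound
  refine ⟨U', hU's, hU'force, hbd, ?_⟩
  have hsub : edgeBoundary G U' ⊆ ↑(insert e (ρ.image Prod.fst)) := by
    intro x hx
    rcases hbd x hx with h | h
    · exact Finset.mem_coe.mpr (Finset.mem_insert.mpr (Or.inr h))
    · exact Finset.mem_coe.mpr (Finset.mem_insert.mpr (Or.inl h))
  have h1 : (edgeBoundary G U').ncard ≤ (insert e (ρ.image Prod.fst)).card :=
    ncard_le_of_subset_finset hsub
  have h2 : (insert e (ρ.image Prod.fst)).card ≤ ρ.card + 1 := by
    calc (insert e (ρ.image Prod.fst)).card ≤ (ρ.image Prod.fst).card + 1 :=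
          Finset.card_insert_le _ _
      _ ≤ ρ.card + 1 := by
          have := Finset.card_image_le (s := ρ) (f := Prod.fst)
          omega
  have hexp' := hexp U' hU's
  calc δ * U'.card ≤ (edgeBoundary G U').ncard := hexp'
    _ ≤ ((ρ.card : ℝ) + 1) := by
        have : ((edgeBoundary G U').ncard : ℝ) ≤ ((ρ.card : ℝ) + 1) := by
          exact_mod_cast le_trans h1 h2
        exact this

end TS15

namespace TS15
set_option linter.unusedSectionVars false
set_option maxHeartbeats 2000000
open Finset

variable {V : Type} [Fintype V] [DecidableEq V] (G : SimpleGraph V) [DecidableRel G.Adj]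
variable (χ : V → ZMod 2) (s : ℕ)

/-- The download dichotomy: when an axiom clause at `v` arrives, either the good partial
assignment can be extended (by at most one literal of the new clause), or else the
configuration must already be large. -/
lemma download_dichotomy {δ : ℝ} (hexp : IsEdgeExpander G s δ) (hδ : 0 ≤ δ) (hs1 : 1 ≤ s)
    (ρ : Finset (Lit (Sym2 V))) (hF : Func ρ) (hP : PSat G χ s ρ)
    (v : V) (f : Sym2 V → Bool)
    (hviol : (∑ e ∈ incidentEdges G v, (if f e then (1 : ZMod 2) else 0)) ≠ χ v) :
    (∃ e ∈ incidentEdges G v, (e, !f e) ∈ ρ) ∨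
    (∃ e ∈ incidentEdges G v, (∀ b, (e, b) ∉ ρ) ∧ PSat G χ s (insert (e, !f e) ρ)) ∨
    (δ * (s + 1) ≤ 2 * ρ.card + (incidentEdges G v).card + 1) := by
  classical
  by_cases hA : ∃ e ∈ incidentEdges G v, (e, !f e) ∈ ρ
  · exact Or.inl hA
  by_cases hB : ∃ e ∈ incidentEdges G v, (∀ b, (e, b) ∉ ρ) ∧ PSat G χ s (insert (e, !f e) ρ)
  · exact Or.inr (Or.inl hB)
  right; right
  push_neg at hA hB
  set dom := ρ.image Prod.fst with hdom
  set Unas := (incidentEdges G v).filter (fun e => e ∉ dom) with hUnas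
  -- each unassigned incident edge admits a small forcing set
  have hstep1 : ∀ e ∈ Unas, ∃ U' : Finset V, U'.card ≤ s ∧ Forces G χ ρ f U' e ∧
      (∀ x ∈ edgeBoundary G U', x ∈ dom ∨ x = e) ∧ δ * U'.card ≤ ρ.card + 1 := by
    intro e heU
    rw [hUnas, Finset.mem_filter] at heU
    obtain ⟨hei, hedom⟩ := heU
    have hnotb : ∀ b, (e, b) ∉ ρ := by
      intro b hb
      exact hedom (mem_dom.mpr ⟨b, hb⟩)
    have hnP : ¬ PSat G χ s (insert (e, !f e) ρ) := hB e hei hnotb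
    unfold PSat at hnP
    push_neg at hnP
    obtain ⟨U, hUcard, hU⟩ := hnP
    have hforce : Forces G χ ρ f U e := by
      intro α hα hpar
      by_contra hne
      have hαe : α e = !f e := bool_resolve _ _ hne
      have hterm : SatTerm α (insert (e, !f e) ρ) := by
        intro l hl
        rcases Finset.mem_insert.mp hl with h | h
        · rw [h, SatLit]
          exact hαe
        · exact hα l h
      obtain ⟨u, hu1, hu2⟩ := hU α hterm
      exact hu2 (hpar u hu1)
    exact forcing_lemma G χ s hexp ρ hF f e hedom U hUcard hforce
  choose U' hc1 hc2 hc3 hc4 using hstep1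
  -- the full union must have more than s vertices
  set Wfun : {e // e ∈ Unas} → Finset V := fun p => U' p.1 p.2 with hWfun
  set Yfull := insert v (Unas.attach.biUnion Wfun) with hYfull
  have hYbig : s < Yfull.card := by
    by_contra hle
    push_neg at hle
    obtain ⟨α, hα1, hα2⟩ := hP Yfull hle
    have hparv : SatParity G χ α v := hα2 v (by rw [hYfull]; exact Finset.mem_insert_self _ _)
    have hneq : ∃ e ∈ incidentEdges G v, α e ≠ f e := by
      by_contra hall
      push_neg at hall
      apply hviol
      rw [satParity_iff] at hparv
      rw [← hparv]
      unfold bparity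
      exact (Finset.sum_congr rfl fun e he => by rw [hall e he]).symm
    obtain ⟨e, hei, hene⟩ := hneq
    by_cases hedom : e ∈ dom
    · obtain ⟨b, hb⟩ := mem_dom.mp hedom
      have hαe : α e = b := hα1 _ hb
      have hbne : b ≠ !f e := fun h => hA e hei (h ▸ hb)
      have : b = f e := by
        cases hbf : f e <;> cases hbb : b <;> simp_all
      rw [this] at hαe
      exact hene hαe
    · have heU : e ∈ Unas := by
        rw [hUnas, Finset.mem_filter]
        exact ⟨hei, hedom⟩
      have hforce := hc2 e heU
      have hsub : U' e heU ⊆ Yfull := by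
        rw [hYfull]
        refine Finset.Subset.trans ?_ (Finset.subset_insert _ _)
        intro u hu
        exact Finset.mem_biUnion.mpr ⟨⟨e, heU⟩, Finset.mem_attach _ _, hu⟩
      have := hforce α hα1 (fun u hu => hα2 u (hsub hu))
      exact hene this
  -- take a minimal set of unassigned edges whose forcing sets overflow
  have hTmem : Unas.attach ∈ Unas.attach.powerset.filter
      (fun T => s < (insert v (T.biUnion Wfun)).card) := by
    simp only [Finset.mem_filter, Finset.mem_powerset]
    exact ⟨Finset.Subset.refl _, by rw [hYfull] at hYbig; exact hYbig⟩
  obtain ⟨T, hTmem', hTmin⟩ :=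
    Finset.exists_min_image _ Finset.card ⟨Unas.attach, hTmem⟩
  simp only [Finset.mem_filter, Finset.mem_powerset] at hTmem'
  obtain ⟨hTsub, hTbig⟩ := hTmem'
  have hTne : T.Nonempty := by
    rcases Finset.eq_empty_or_nonempty T with h | h
    · exfalso
      rw [h] at hTbig
      have h1 : (insert v ((∅ : Finset {x // x ∈ Unas}).biUnion Wfun)).card = 1 := by
        simp
      omega
    · exact h
  obtain ⟨p₀, hp₀⟩ := hTne
  set T' := T.erase p₀ with hT'
  have hT'small : (insert v (T'.biUnion Wfun)).card ≤ s := by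
    by_contra hbig
    push_neg at hbig
    have hmem : T' ∈ Unas.attach.powerset.filter
        (fun T => s < (insert v (T.biUnion Wfun)).card) := by
      simp only [Finset.mem_filter, Finset.mem_powerset]
      exact ⟨le_trans (Finset.erase_subset _ _) hTsub, hbig⟩
    have := hTmin _ hmem
    rw [hT', Finset.card_erase_of_mem hp₀] at this
    have hpos : 0 < T.card := Finset.card_pos.mpr ⟨p₀, hp₀⟩
    omega
  set Yhat := insert v (T'.biUnion Wfun) with hYhat
  -- boundary of Yhat is inside dom ∪ incidentEdges v
  have hYbd : ∀ x ∈ edgeBoundary G Yhat, x ∈ dom ∪ incidentEdges G v := by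
    intro x hx
    obtain ⟨hxe, a, c, hxac, haY, hcY⟩ := hx
    rw [hYhat, Finset.mem_insert] at haY
    rcases haY with rfl | haY
    · refine Finset.mem_union_right _ ?_
      rw [mem_incidentEdges]
      exact ⟨hxe, by rw [hxac]; simp⟩
    · obtain ⟨p, hpT', hap⟩ := Finset.mem_biUnion.mp haY
      have hcP : c ∉ Wfun p := by
        intro hc
        apply hcY
        rw [hYhat]
        refine Finset.mem_insert_of_mem ?_
        exact Finset.mem_biUnion.mpr ⟨p, hpT', hc⟩
      have hxbd : x ∈ edgeBoundary G (Wfun p) := ⟨hxe, a, c, hxac, hap, hcP⟩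
      rcases hc3 p.1 p.2 x hxbd with h | h
      · exact Finset.mem_union_left _ h
      · subst h
        have hp1 : (↑p : Sym2 V) ∈ (incidentEdges G v).filter (fun e => e ∉ dom) := p.2
        exact Finset.mem_union_right _ (Finset.mem_filter.mp hp1).1
  -- expansion on Yhat
  have hexpY : δ * Yhat.card ≤ (ρ.card : ℝ) + (incidentEdges G v).card := by
    have h1 : (edgeBoundary G Yhat).ncard ≤ (dom ∪ incidentEdges G v).card := by
      apply ncard_le_of_subset_finset
      intro x hx
      exact Finset.mem_coe.mpr (hYbd x hx)
    have h2 : (dom ∪ incidentEdges G v).card ≤ ρ.card + (incidentEdges G v).card := by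
      calc (dom ∪ incidentEdges G v).card ≤ dom.card + (incidentEdges G v).card :=
            Finset.card_union_le _ _
        _ ≤ ρ.card + (incidentEdges G v).card := by
            have := Finset.card_image_le (s := ρ) (f := Prod.fst)
            rw [hdom]; omega
    calc δ * Yhat.card ≤ (edgeBoundary G Yhat).ncard := hexp Yhat hT'small
      _ ≤ (ρ.card : ℝ) + (incidentEdges G v).card := by exact_mod_cast le_trans h1 h2
  -- size bound: s + 1 ≤ Yhat.card + (Wfun p₀).card
  have hsize : s + 1 ≤ Yhat.card + (Wfun p₀).card := by
    have hTY : insert v (T.biUnion Wfun) ⊆ Yhat ∪ Wfun p₀ := by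
      intro u hu
      rw [Finset.mem_insert] at hu
      rcases hu with rfl | hu
      · exact Finset.mem_union_left _ (by rw [hYhat]; exact Finset.mem_insert_self _ _)
      · obtain ⟨p, hpT, hup⟩ := Finset.mem_biUnion.mp hu
        by_cases hpp : p = p₀
        · exact Finset.mem_union_right _ (hpp ▸ hup)
        · refine Finset.mem_union_left _ ?_
          rw [hYhat]
          refine Finset.mem_insert_of_mem ?_
          exact Finset.mem_biUnion.mpr ⟨p, Finset.mem_erase.mpr ⟨hpp, hpT⟩, hup⟩
    have h1 : (insert v (T.biUnion Wfun)).card ≤ (Yhat ∪ Wfun p₀).card :=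
      Finset.card_le_card hTY
    have h2 : (Yhat ∪ Wfun p₀).card ≤ Yhat.card + (Wfun p₀).card := Finset.card_union_le _ _
    omega
  -- conclude
  have hW0 : δ * (Wfun p₀).card ≤ (ρ.card : ℝ) + 1 := hc4 p₀.1 p₀.2
  have hcast : (δ : ℝ) * (s + 1) ≤ δ * Yhat.card + δ * (Wfun p₀).card := by
    rw [← mul_add]
    apply mul_le_mul_of_nonneg_left _ hδ
    exact_mod_cast hsize
  calc δ * ((s : ℝ) + 1) ≤ δ * Yhat.card + δ * (Wfun p₀).card := hcast
    _ ≤ ((ρ.card : ℝ) + (incidentEdges G v).card) + ((ρ.card : ℝ) + 1) := by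
        exact add_le_add hexpY hW0
    _ = 2 * ρ.card + (incidentEdges G v).card + 1 := by ring

end TS15

namespace TS15
set_option linter.unusedSectionVars false
set_option maxHeartbeats 1000000
open Finset

variable {V : Type} [Fintype V] [DecidableEq V] (G : SimpleGraph V) [DecidableRel G.Adj]
variable (χ : V → ZMod 2) (s : ℕ)

/-- Invariant for the main (goodness) argument. -/
def Inv (𝒞 : Config (Sym2 V)) : Prop :=
  ∃ ρ : Finset (Lit (Sym2 V)), Func ρ ∧ PSat G χ s ρ ∧
    (∀ C ∈ 𝒞, ∃ l, l ∈ C ∧ l ∈ ρ) ∧ ρ.card ≤ 𝒞.card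

lemma shrink (𝒞 : Config (Sym2 V)) (ρ : Finset (Lit (Sym2 V))) (hF : Func ρ)
    (hP : PSat G χ s ρ) (hH : ∀ C ∈ 𝒞, ∃ l, l ∈ C ∧ l ∈ ρ) : Inv G χ s 𝒞 := by
  classical
  set ρ' := 𝒞.attach.image (fun p => (hH p.1 p.2).choose) with hρ'
  have hsub : ρ' ⊆ ρ := by
    intro l hl
    rw [hρ', Finset.mem_image] at hl
    obtain ⟨p, hp, rfl⟩ := hl
    exact (hH p.1 p.2).choose_spec.2
  refine ⟨ρ', Func_mono hsub hF, PSat_mono G χ s hsub hP, ?_, ?_⟩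
  · intro C hC
    refine ⟨(hH C hC).choose, (hH C hC).choose_spec.1, ?_⟩
    rw [hρ']
    exact Finset.mem_image.mpr ⟨⟨C, hC⟩, Finset.mem_attach _ _, rfl⟩
  · calc ρ'.card ≤ 𝒞.attach.card := Finset.card_image_le
      _ = 𝒞.card := Finset.card_attach
 
lemma resolvent_hit {ρ : Finset (Lit (Sym2 V))} (hF : Func ρ)
    {E C D : Clause (Sym2 V)} (h : IsResolvent E C D)
    (hC : ∃ l, l ∈ C ∧ l ∈ ρ) (hD : ∃ l, l ∈ D ∧ l ∈ ρ) : ∃ l, l ∈ E ∧ l ∈ ρ := by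
  obtain ⟨v, b, hvC, hvD, hE⟩ := h
  obtain ⟨lC, hlC, hlCρ⟩ := hC
  obtain ⟨lD, hlD, hlDρ⟩ := hD
  by_cases h1 : lC = (v, b)
  · by_cases h2 : lD = (v, !b)
    · exfalso
      have := hF v b (!b) (h1 ▸ hlCρ) (h2 ▸ hlDρ)
      simp at this
    · refine ⟨lD, ?_, hlDρ⟩
      rw [hE]
      exact Finset.mem_union_right _ (Finset.mem_erase.mpr ⟨h2, hlD⟩)
  · refine ⟨lC, ?_, hlCρ⟩
    rw [hE]
    exact Finset.mem_union_left _ (Finset.mem_erase.mpr ⟨h1, hlC⟩)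

lemma step_preserve {d : ℕ} {δ : ℝ} (hreg : G.IsRegularOfDegree d)
    (hexp : IsEdgeExpander G s δ) (hδ : 0 ≤ δ) (hs1 : 1 ≤ s)
    {𝒞 𝒟 : Config (Sym2 V)} (hstep : ResStep (Tseitin G χ) 𝒞 𝒟) (hI : Inv G χ s 𝒞) :
    Inv G χ s 𝒟 ∨ (δ * (s + 1) ≤ 2 * 𝒞.card + d + 1) := by
  obtain ⟨ρ, hF, hP, hH, hcard⟩ := hI
  cases hstep with
  | download A hA =>
    have hA' : ∃ v, A ∈ parityCNF G χ v := by
      simpa [Tseitin, Set.mem_iUnion] using hA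
    obtain ⟨v, hAv⟩ := hA'
    obtain ⟨f, hviol, hAeq⟩ := hAv
    rcases download_dichotomy G χ s hexp hδ hs1 ρ hF hP v f hviol with hc | hc | hc
    · obtain ⟨e, hei, heρ⟩ := hc
      left
      refine shrink G χ s _ ρ hF hP ?_
      intro C hC
      rcases Finset.mem_insert.mp hC with rfl | hC
      · exact ⟨(e, !f e), by rw [hAeq]; exact Finset.mem_image.mpr ⟨e, hei, rfl⟩, heρ⟩
      · exact hH C hC
    · obtain ⟨e, hei, hnot, hPS⟩ := hc
      left
      refine shrink G χ s _ (insert (e, !f e) ρ) (Func_insert hF _ hnot) hPS ?_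
      intro C hC
      rcases Finset.mem_insert.mp hC with rfl | hC
      · exact ⟨(e, !f e), by rw [hAeq]; exact Finset.mem_image.mpr ⟨e, hei, rfl⟩,
          Finset.mem_insert_self _ _⟩
      · obtain ⟨l, hl1, hl2⟩ := hH C hC
        exact ⟨l, hl1, Finset.mem_insert_of_mem hl2⟩
    · right
      have hd : (incidentEdges G v).card = d := by
        rw [card_incidentEdges]
        exact hreg v
      rw [hd] at hc
      refine le_trans hc ?_
      have : (ρ.card : ℝ) ≤ 𝒞.card := by exact_mod_cast hcard
      linarith
  | infer E C D hC hD h =>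
    left
    refine shrink G χ s _ ρ hF hP ?_
    intro C' hC'
    rcases Finset.mem_insert.mp hC' with rfl | hC'
    · exact resolvent_hit hF h (hH C hC) (hH D hD)
    · exact hH C' hC'
  | weaken E C hC hsub =>
    left
    refine shrink G χ s _ ρ hF hP ?_
    intro C' hC'
    rcases Finset.mem_insert.mp hC' with rfl | hC'
    · obtain ⟨l, hl1, hl2⟩ := hH C hC
      exact ⟨l, hsub hl1, hl2⟩
    · exact hH C' hC'
  | erase C hC =>
    left
    refine shrink G χ s _ ρ hF hP ?_
    intro C' hC'
    exact hH C' (Finset.mem_of_mem_erase hC')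

/-- Generic engine walking along a refutation. -/
lemma engine {X : Type} [DecidableEq X] {F : Set (Clause X)} (π : ResRefutation F)
    (I : Config X → Prop) (P : ℕ → Prop)
    (h0 : I (π.conf 0))
    (hstep : ∀ t, t < π.len → I (π.conf t) → (I (π.conf (t + 1)) ∨ ∃ t' ≤ π.len, P t'))
    (hfin : ¬ I (π.conf π.len)) : ∃ t ≤ π.len, P t := by
  have H : ∀ t, t ≤ π.len → (I (π.conf t) ∨ ∃ t' ≤ π.len, P t') := by
    intro t
    induction t with
    | zero => exact fun _ => Or.inl h0
    | succ k ih =>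
      intro hk
      have hk' : k ≤ π.len := le_of_lt (Nat.lt_of_succ_le hk)
      rcases ih hk' with hI | hP
      · exact hstep k (Nat.lt_of_succ_le hk) hI
      · exact Or.inr hP
  rcases H π.len le_rfl with hI | hP
  · exact absurd hI hfin
  · exact hP

/-- Main space bound from the goodness invariant. -/
lemma P3 {d : ℕ} {δ : ℝ} (hconn : G.Connected) (hreg : G.IsRegularOfDegree d)
    (hexp : IsEdgeExpander G s δ) (hδ : 0 ≤ δ) (hs1 : 1 ≤ s) (hs2 : s < Fintype.card V)
    (π : ResRefutation (Tseitin G χ)) :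
    ∃ t ≤ π.len, δ * (s + 1) ≤ 2 * ((π.conf t).card : ℝ) + d + 1 := by
  refine engine π (Inv G χ s) _ ?_ ?_ ?_
  · rw [π.init]
    exact ⟨∅, by intro e b b' h; simp at h, PSat_empty G χ s hconn hs2,
      by intro C hC; simp at hC, by simp⟩
  · intro t ht hI
    rcases step_preserve G χ s hreg hexp hδ hs1 (π.step t ht) hI with h | h
    · exact Or.inl h
    · exact Or.inr ⟨t, le_of_lt ht, h⟩
  · intro hI
    obtain ⟨ρ, -, -, hH, -⟩ := hI
    obtain ⟨l, hl, -⟩ := hH ∅ π.final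
    simp at hl

/-- Invariant for the simple blocker argument. -/
def Inv2 (𝒞 : Config (Sym2 V)) : Prop :=
  ∃ ρ : Finset (Lit (Sym2 V)), Func ρ ∧
    (∀ C ∈ 𝒞, ∃ l, l ∈ C ∧ l ∈ ρ) ∧ ρ.card ≤ 𝒞.card

lemma shrink2 (𝒞 : Config (Sym2 V)) (ρ : Finset (Lit (Sym2 V))) (hF : Func ρ)
    (hH : ∀ C ∈ 𝒞, ∃ l, l ∈ C ∧ l ∈ ρ) : Inv2 𝒞 := by
  classical
  set ρ' := 𝒞.attach.image (fun p => (hH p.1 p.2).choose) with hρ'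
  have hsub : ρ' ⊆ ρ := by
    intro l hl
    rw [hρ', Finset.mem_image] at hl
    obtain ⟨p, hp, rfl⟩ := hl
    exact (hH p.1 p.2).choose_spec.2
  refine ⟨ρ', Func_mono hsub hF, ?_, ?_⟩
  · intro C hC
    refine ⟨(hH C hC).choose, (hH C hC).choose_spec.1, ?_⟩
    rw [hρ']
    exact Finset.mem_image.mpr ⟨⟨C, hC⟩, Finset.mem_attach _ _, rfl⟩
  · calc ρ'.card ≤ 𝒞.attach.card := Finset.card_image_le
      _ = 𝒞.card := Finset.card_attach

lemma step_preserve2 {d : ℕ} (hreg : G.IsRegularOfDegree d)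
    {𝒞 𝒟 : Config (Sym2 V)} (hstep : ResStep (Tseitin G χ) 𝒞 𝒟) (hI : Inv2 𝒞) :
    Inv2 𝒟 ∨ (d + 1 ≤ 𝒟.card) := by
  classical
  obtain ⟨ρ, hF, hH, hcard⟩ := hI
  cases hstep with
  | download A hA =>
    have hA' : ∃ v, A ∈ parityCNF G χ v := by
      simpa [Tseitin, Set.mem_iUnion] using hA
    obtain ⟨v, hAv⟩ := hA'
    obtain ⟨f, hviol, hAeq⟩ := hAv
    by_cases h1 : ∃ e ∈ incidentEdges G v, (e, !f e) ∈ ρ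
    · obtain ⟨e, hei, heρ⟩ := h1
      left
      refine shrink2 _ ρ hF ?_
      intro C hC
      rcases Finset.mem_insert.mp hC with rfl | hC
      · exact ⟨(e, !f e), by rw [hAeq]; exact Finset.mem_image.mpr ⟨e, hei, rfl⟩, heρ⟩
      · exact hH C hC
    · by_cases h2 : ∃ e ∈ incidentEdges G v, ∀ b, (e, b) ∉ ρ
      · obtain ⟨e, hei, hnot⟩ := h2
        left
        refine shrink2 _ (insert (e, !f e) ρ) (Func_insert hF _ hnot) ?_
        intro C hC
        rcases Finset.mem_insert.mp hC with rfl | hC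
        · exact ⟨(e, !f e), by rw [hAeq]; exact Finset.mem_image.mpr ⟨e, hei, rfl⟩,
            Finset.mem_insert_self _ _⟩
        · obtain ⟨l, hl1, hl2⟩ := hH C hC
          exact ⟨l, hl1, Finset.mem_insert_of_mem hl2⟩
      · right
        push_neg at h1 h2
        have hdomsub : incidentEdges G v ⊆ ρ.image Prod.fst := by
          intro e he
          obtain ⟨b, hb⟩ := h2 e he
          exact mem_dom.mpr ⟨b, hb⟩
        have hd : d ≤ ρ.card := by
          have h3 : (incidentEdges G v).card ≤ (ρ.image Prod.fst).card :=
            Finset.card_le_card hdomsub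
          have h4 : (ρ.image Prod.fst).card ≤ ρ.card := Finset.card_image_le
          have h5 : (incidentEdges G v).card = d := by
            rw [card_incidentEdges]; exact hreg v
          omega
        have hAnot : A ∉ 𝒞 := by
          intro hmem
          obtain ⟨l, hlA, hlρ⟩ := hH A hmem
          rw [hAeq, Finset.mem_image] at hlA
          obtain ⟨e, hei, rfl⟩ := hlA
          exact h1 e hei hlρ
        rw [Finset.card_insert_of_notMem hAnot]
        omega
  | infer E C D hC hD h =>
    left
    refine shrink2 _ ρ hF ?_
    intro C' hC'
    rcases Finset.mem_insert.mp hC' with rfl | hC'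
    · exact resolvent_hit hF h (hH C hC) (hH D hD)
    · exact hH C' hC'
  | weaken E C hC hsub =>
    left
    refine shrink2 _ ρ hF ?_
    intro C' hC'
    rcases Finset.mem_insert.mp hC' with rfl | hC'
    · obtain ⟨l, hl1, hl2⟩ := hH C hC
      exact ⟨l, hsub hl1, hl2⟩
    · exact hH C' hC'
  | erase C hC =>
    left
    refine shrink2 _ ρ hF ?_
    intro C' hC'
    exact hH C' (Finset.mem_of_mem_erase hC')

/-- The blocker space bound: some configuration has at least `d + 1` clauses. -/
lemma P2 {d : ℕ} (hreg : G.IsRegularOfDegree d)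
    (π : ResRefutation (Tseitin G χ)) :
    ∃ t ≤ π.len, d + 1 ≤ (π.conf t).card := by
  classical
  refine engine π (fun 𝒞 => Inv2 𝒞) _ ?_ ?_ ?_
  · rw [π.init]
    exact ⟨∅, by intro e b b' h; simp at h, by intro C hC; simp at hC, by simp⟩
  · intro t ht hI
    rcases step_preserve2 G χ hreg (π.step t ht) hI with h | h
    · exact Or.inl h
    · exact Or.inr ⟨t + 1, ht, h⟩
  · intro hI
    obtain ⟨ρ, -, hH, -⟩ := hI
    obtain ⟨l, hl, -⟩ := hH ∅ π.final
    simp at hl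

end TS15

namespace TS15
set_option linter.unusedSectionVars false
set_option maxHeartbeats 1000000
open Finset

variable {V : Type} [Fintype V] [DecidableEq V] (G : SimpleGraph V) [DecidableRel G.Adj]

lemma walk_exit (U : Finset V) : ∀ {u w : V}, G.Walk u w → u ∈ U → w ∉ U →
    ∃ a x, a ∈ U ∧ x ∉ U ∧ G.Adj a x := by
  intro u w p
  induction p with
  | nil => intro hu hw; exact absurd hu hw
  | @cons u c w h p ih =>
    intro hu hw
    by_cases hc : c ∈ U
    · exact ih hc hw
    · exact ⟨u, c, hu, hc, h⟩

lemma exit_edge (hconn : G.Connected) {U : Finset V} (hne : U.Nonempty)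
    (hproper : U ≠ Finset.univ) : ∃ a x, a ∈ U ∧ x ∉ U ∧ G.Adj a x := by
  obtain ⟨u, hu⟩ := hne
  obtain ⟨w, hw⟩ : ∃ w, w ∉ U := by
    by_contra h
    push_neg at h
    exact hproper (Finset.eq_univ_iff_forall.mpr h)
  obtain ⟨p⟩ := hconn.preconnected u w
  exact walk_exit G U p hu hw

/-- Internal edges of a vertex set. -/
noncomputable def Ein (U : Finset V) : Finset (Sym2 V) :=
  @Finset.filter _ (fun e => ∀ v ∈ e, v ∈ U) (Classical.decPred _) G.edgeFinset

lemma mem_Ein {U : Finset V} {e : Sym2 V} :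
    e ∈ Ein G U ↔ e ∈ G.edgeFinset ∧ ∀ v ∈ e, v ∈ U := by
  simp [Ein, Finset.mem_filter]

lemma exists_connected_core (hconn : G.Connected) :
    ∀ m, 1 ≤ m → m ≤ Fintype.card V →
      ∃ U : Finset V, U.card = m ∧ m - 1 ≤ (Ein G U).card := by
  intro m
  induction m with
  | zero => intro h; omega
  | succ k ih =>
    intro h1 h2
    rcases Nat.eq_zero_or_pos k with hk | hk
    · subst hk
      have : Nonempty V := Fintype.card_pos_iff.mp (by omega)
      obtain ⟨v⟩ := this
      exact ⟨{v}, by simp, by omega⟩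
    · obtain ⟨U, hUcard, hUE⟩ := ih hk (by omega)
      have hproper : U ≠ Finset.univ := by
        intro h
        rw [h, Finset.card_univ] at hUcard
        omega
      have hne : U.Nonempty := by
        rw [← Finset.card_pos, hUcard]; omega
      obtain ⟨a, x, haU, hxU, hax⟩ := exit_edge G hconn hne hproper
      refine ⟨insert x U, ?_, ?_⟩
      · rw [Finset.card_insert_of_notMem hxU, hUcard]
      · have hnew : s(a, x) ∈ Ein G (insert x U) := by
          rw [mem_Ein]
          constructor
          · rw [SimpleGraph.mem_edgeFinset, SimpleGraph.mem_edgeSet]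
            exact hax
          · intro v hv
            rw [Sym2.mem_iff] at hv
            rcases hv with rfl | rfl
            · exact Finset.mem_insert_of_mem haU
            · exact Finset.mem_insert_self _ _
        have hold : Ein G U ⊆ Ein G (insert x U) := by
          intro e he
          rw [mem_Ein] at he ⊢
          exact ⟨he.1, fun v hv => Finset.mem_insert_of_mem (he.2 v hv)⟩
        have hnotold : s(a, x) ∉ Ein G U := by
          rw [mem_Ein]
          rintro ⟨-, hall⟩
          exact hxU (hall x (by simp))
        have hsub : insert (s(a,x)) (Ein G U) ⊆ Ein G (insert x U) := by
          intro e he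
          rcases Finset.mem_insert.mp he with rfl | he
          · exact hnew
          · exact hold he
        have := Finset.card_le_card hsub
        rw [Finset.card_insert_of_notMem hnotold] at this
        omega

/-- The boundary as a finset. -/
noncomputable def bF (U : Finset V) : Finset (Sym2 V) :=
  @Finset.filter _ (fun e => ∃ a b, e = s(a,b) ∧ a ∈ U ∧ b ∉ U) (Classical.decPred _)
    G.edgeFinset

lemma edgeBoundary_eq_bF (U : Finset V) : edgeBoundary G U = ↑(bF G U) := by
  ext e
  constructor
  · rintro ⟨h1, a, b, hab, ha, hb⟩
    simp only [bF, Finset.mem_coe, Finset.mem_filter, SimpleGraph.mem_edgeFinset]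
    exact ⟨h1, a, b, hab, ha, hb⟩
  · intro h
    simp only [bF, Finset.mem_coe, Finset.mem_filter, SimpleGraph.mem_edgeFinset] at h
    exact ⟨h.1, h.2⟩

lemma boundary_count {d : ℕ} (hreg : G.IsRegularOfDegree d) (U : Finset V) :
    (bF G U).card + 2 * (Ein G U).card ≤ d * U.card := by
  classical
  have hdeg : d * U.card = ∑ u ∈ U, (incidentEdges G u).card := by
    have hcongr : ∀ u ∈ U, (incidentEdges G u).card = d := fun u _ => by
      rw [card_incidentEdges]; exact hreg u
    rw [Finset.sum_congr rfl hcongr, Finset.sum_const, smul_eq_mul, mul_comm]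
  have hsum : ∑ u ∈ U, (incidentEdges G u).card
      = ∑ e ∈ G.edgeFinset, (U.filter (fun u => u ∈ e)).card := by
    have h1 : ∀ u ∈ U, (incidentEdges G u).card
        = ∑ e ∈ G.edgeFinset, (if u ∈ e then 1 else 0) := by
      intro u _
      rw [incidentEdges, ← Finset.sum_filter]
      simp
    rw [Finset.sum_congr rfl h1, Finset.sum_comm]
    refine Finset.sum_congr rfl fun e _ => ?_
    rw [← Finset.sum_filter]
    simp
  have hdisj : Disjoint (Ein G U) (bF G U) := by
    rw [Finset.disjoint_left]
    intro e he hb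
    rw [mem_Ein] at he
    simp only [bF, Finset.mem_filter] at hb
    obtain ⟨-, a, b, rfl, haU, hbU⟩ := hb
    exact hbU (he.2 b (by simp))
  have hsub : (Ein G U) ∪ (bF G U) ⊆ G.edgeFinset := by
    intro e he
    rcases Finset.mem_union.mp he with h | h
    · exact ((mem_Ein G).mp h).1
    · simp only [bF, Finset.mem_filter] at h
      exact h.1
  have hlow : ∑ e ∈ (Ein G U) ∪ (bF G U), (U.filter (fun u => u ∈ e)).card
      ≤ ∑ e ∈ G.edgeFinset, (U.filter (fun u => u ∈ e)).card :=
    Finset.sum_le_sum_of_subset hsub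
  have hsplit : ∑ e ∈ (Ein G U) ∪ (bF G U), (U.filter (fun u => u ∈ e)).card
      = ∑ e ∈ Ein G U, (U.filter (fun u => u ∈ e)).card
        + ∑ e ∈ bF G U, (U.filter (fun u => u ∈ e)).card := by
    rw [Finset.sum_union hdisj]
  have hEin : ∀ e ∈ Ein G U, 2 ≤ (U.filter (fun u => u ∈ e)).card := by
    intro e he
    rw [mem_Ein] at he
    obtain ⟨hef, hall⟩ := he
    induction e using Sym2.ind with
    | _ a b =>
      have hab : a ≠ b := by
        rw [SimpleGraph.mem_edgeFinset, SimpleGraph.mem_edgeSet] at hef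
        exact hef.ne
      have h2 : ({a, b} : Finset V) ⊆ U.filter (fun u => u ∈ s(a,b)) := by
        intro v hv
        rcases Finset.mem_insert.mp hv with rfl | hv
        · exact Finset.mem_filter.mpr ⟨hall v (by simp), by simp⟩
        · rw [Finset.mem_singleton] at hv
          subst hv
          exact Finset.mem_filter.mpr ⟨hall v (by simp), by simp⟩
      have := Finset.card_le_card h2
      rw [Finset.card_insert_of_notMem (by simp [hab]), Finset.card_singleton] at this
      exact this
  have hbFc : ∀ e ∈ bF G U, 1 ≤ (U.filter (fun u => u ∈ e)).card := by
    intro e he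
    simp only [bF, Finset.mem_filter] at he
    obtain ⟨-, a, b, rfl, haU, hbU⟩ := he
    rw [Nat.one_le_iff_ne_zero, ← Nat.pos_iff_ne_zero, Finset.card_pos]
    exact ⟨a, Finset.mem_filter.mpr ⟨haU, by simp⟩⟩
  have h2E : 2 * (Ein G U).card ≤ ∑ e ∈ Ein G U, (U.filter (fun u => u ∈ e)).card := by
    calc 2 * (Ein G U).card = ∑ _e ∈ Ein G U, 2 := by rw [Finset.sum_const]; ring
      _ ≤ _ := Finset.sum_le_sum hEin
  have h1B : (bF G U).card ≤ ∑ e ∈ bF G U, (U.filter (fun u => u ∈ e)).card := by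
    calc (bF G U).card = ∑ _e ∈ bF G U, 1 := by rw [Finset.sum_const]; ring
      _ ≤ _ := Finset.sum_le_sum hbFc
  omega

/-- For a connected `d`-regular graph an `(s,δ)`-expander with `1 ≤ s < |V|` satisfies
`δ s ≤ d s - 2 (s-1)`. -/
lemma expander_delta_bound {d : ℕ} {δ : ℝ} {s : ℕ} (hconn : G.Connected)
    (hreg : G.IsRegularOfDegree d) (hexp : IsEdgeExpander G s δ)
    (hs1 : 1 ≤ s) (hsn : s < Fintype.card V) :
    δ * s ≤ (d : ℝ) * s - 2 * ((s : ℝ) - 1) := by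
  obtain ⟨U, hUcard, hUE⟩ := exists_connected_core G hconn s hs1 (le_of_lt hsn)
  have hb := hexp U (le_of_eq hUcard)
  rw [edgeBoundary_eq_bF] at hb
  rw [Set.ncard_coe_finset] at hb
  have hcount := boundary_count G hreg U
  rw [hUcard] at hb hcount
  have hnat : (bF G U).card + 2 * (s - 1) ≤ d * s := by
    have := hUE
    omega
  have hcast : ((bF G U).card : ℝ) + 2 * ((s : ℝ) - 1) ≤ (d : ℝ) * s := by
    have h1 : ((s : ℝ) - 1) = ((s - 1 : ℕ) : ℝ) := by
      rw [Nat.cast_sub hs1]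
      simp
    rw [h1]
    exact_mod_cast hnat
  linarith

end TS15
/-- for a connected `d`-regular `(s, δ)`-edge expander `G` and a
charge function `χ` with odd total charge, every resolution refutation of
`Ts(G, χ)` requires clause space at least `δ · s / d`. -/
theorem tseitin_space_lower_bound {V : Type} [Fintype V] [DecidableEq V]
    (G : SimpleGraph V) [DecidableRel G.Adj] (χ : V → ZMod 2)
    (d s : ℕ) (δ : ℝ) (hconn : G.Connected) (hreg : G.IsRegularOfDegree d)
    (hexp : IsEdgeExpander G s δ) (hodd : ∑ v : V, χ v = 1)
    (π : ResRefutation (Tseitin G χ)) :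
    ∃ t ≤ π.len, δ * (s : ℝ) / (d : ℝ) ≤ ((π.conf t).card : ℝ) := by
  classical
  by_cases hd0 : d = 0
  · refine ⟨0, Nat.zero_le _, ?_⟩
    subst hd0
    rw [π.init]
    simp
  by_cases hδ0 : δ ≤ 0
  · refine ⟨0, Nat.zero_le _, ?_⟩
    rw [π.init]
    simp only [Finset.card_empty, Nat.cast_zero]
    apply div_nonpos_of_nonpos_of_nonneg
    · exact mul_nonpos_of_nonpos_of_nonneg hδ0 (by positivity)
    · positivity
  push_neg at hδ0
  by_cases hs0 : s = 0
  · refine ⟨0, Nat.zero_le _, ?_⟩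
    subst hs0
    rw [π.init]
    simp
  have hd1 : 1 ≤ d := Nat.one_le_iff_ne_zero.mpr hd0
  have hs1 : 1 ≤ s := Nat.one_le_iff_ne_zero.mpr hs0
  have hne : Nonempty V := by
    by_contra h
    haveI := not_nonempty_iff.mp h
    rw [Finset.univ_eq_empty, Finset.sum_empty] at hodd
    exact absurd hodd (by decide)
  have hdR : (1 : ℝ) ≤ (d : ℝ) := by exact_mod_cast hd1
  have hsR : (1 : ℝ) ≤ (s : ℝ) := by exact_mod_cast hs1
  have hdpos : (0 : ℝ) < (d : ℝ) := by linarith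
  have hsn : s < Fintype.card V := by
    by_contra h
    push_neg at h
    have hb := hexp Finset.univ (by rw [Finset.card_univ]; exact h)
    have hempty : edgeBoundary G Finset.univ = ∅ := by
      ext e
      simp [edgeBoundary]
    rw [hempty, Set.ncard_empty, Finset.card_univ] at hb
    have hcard1 : (1 : ℝ) ≤ (Fintype.card V : ℝ) := by
      exact_mod_cast Fintype.card_pos
    push_cast at hb
    nlinarith [mul_le_mul_of_nonneg_left hcard1 (le_of_lt hδ0)]
  have hδd := TS15.expander_delta_bound G hconn hreg hexp hs1 hsn
  by_cases hd2 : d ≤ 2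
  · -- small-degree case: the bound is at most 1
    have hdle2R : (d : ℝ) ≤ 2 := by exact_mod_cast hd2
    have hprod : ((d : ℝ) - 2) * ((s : ℝ) - 1) ≤ 0 :=
      mul_nonpos_of_nonpos_of_nonneg (by linarith) (by linarith)
    have h1 : δ * s ≤ (d : ℝ) := by nlinarith
    have h2 : δ * (s : ℝ) / (d : ℝ) ≤ 1 := by
      rw [div_le_one hdpos]
      linarith
    refine ⟨π.len, le_rfl, ?_⟩
    have h3 : 1 ≤ (π.conf π.len).card := Finset.card_pos.mpr ⟨∅, π.final⟩
    have h4 : (1 : ℝ) ≤ ((π.conf π.len).card : ℝ) := by exact_mod_cast h3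
    linarith
  push_neg at hd2
  have hd3R : (3 : ℝ) ≤ (d : ℝ) := by exact_mod_cast hd2
  by_cases hcase : δ * s ≤ (d : ℝ) * (d + 1)
  · -- moderate case: use the blocker bound
    obtain ⟨t, ht, hcard⟩ := TS15.P2 G χ hreg π
    refine ⟨t, ht, ?_⟩
    have h1 : δ * (s : ℝ) / (d : ℝ) ≤ (d : ℝ) + 1 := by
      rw [div_le_iff₀ hdpos]
      nlinarith
    have h2 : ((d : ℝ) + 1) ≤ ((π.conf t).card : ℝ) := by exact_mod_cast hcard
    linarith
  push_neg at hcase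
  -- main case: use the goodness bound
  obtain ⟨t, ht, hb⟩ := TS15.P3 G χ s hconn hreg hexp (le_of_lt hδ0) hs1 hsn π
  refine ⟨t, ht, ?_⟩
  set c := ((π.conf t).card : ℝ) with hc
  have hc0 : 0 ≤ c := by positivity
  rw [div_le_iff₀ hdpos]
  -- goal : δ * s ≤ c * d
  have hbd : (d : ℝ) * (δ * (s + 1)) ≤ (d : ℝ) * (2 * c + d + 1) :=
    mul_le_mul_of_nonneg_left hb (by linarith)
  have h1 : 0 ≤ ((d : ℝ) - 2) * (δ * s - (d : ℝ) * (d + 1)) :=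
    mul_nonneg (by linarith) (by linarith)
  have h2 : 0 ≤ (d : ℝ) * (((d : ℝ) + 1) * ((d : ℝ) - 3)) := by
    apply mul_nonneg (by linarith)
    apply mul_nonneg (by linarith) (by linarith)
  have h3 : 0 ≤ (d : ℝ) * δ := by
    apply mul_nonneg (by linarith) (by linarith)
  nlinarith [hbd, h1, h2, h3]
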